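/- Let κ₀ > 0, ζ > 0, L > 0, s > 0, J ∈ ℂ, and let w ∈ ℂ² satisfy Re(w·w) ≥ ζ s² and ‖w‖ ≤ L·s. Then z := κ₀·√(w·w) satisfies Re z ≥ κ₀·√ζ·s > 0, and the two-dimensional pulled-back Helmholtz kernel value g := (i/4)·(−2i/π)·(∫₀^∞ exp((i−t)z)/√(t²−2it) dt)·J satisfies |g| ≤ (|J|/4)·√(2/(π·κ₀·√ζ))·exp(κ₀·L·s)·s^{−1/2}. -/

import Mathlib

noncomputable section

open Complex MeasureTheory

/-- The complex-bilinear dot product `w · w = ∑ i, wᵢ²` on `ℂ^d`. -/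
def cdot {d : ℕ} (w : EuclideanSpace ℂ (Fin d)) : ℂ := ∑ i, w i * w i

/-- The principal branch of the complex square root. -/
def csqrt (z : ℂ) : ℂ := z ^ (1 / 2 : ℂ)

lemma helm_aux_integral (a : ℝ) (ha : 0 < a) :
    ∫ t in Set.Ioi (0:ℝ), t ^ (-(1/2):ℝ) * Real.exp (-(a*t))
      = (1/a) ^ ((1/2):ℝ) * Real.sqrt Real.pi := by
  have h := Real.integral_rpow_mul_exp_neg_mul_Ioi (by norm_num : (0:ℝ) < 1/2) ha
  rw [Real.Gamma_one_half_eq] at h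
  norm_num at h ⊢
  convert h using 2

lemma helm_aux_integrable (a : ℝ) (ha : 0 < a) :
    IntegrableOn (fun t => t ^ (-(1/2):ℝ) * Real.exp (-(a*t))) (Set.Ioi (0:ℝ)) := by
  have := integrableOn_rpow_mul_exp_neg_mul_rpow (by norm_num : (-1:ℝ) < -(1/2)) (by norm_num : (0:ℝ) < 1) ha
  simpa [Real.rpow_one, neg_mul] using this

set_option maxHeartbeats 1000000 in
theorem helmholtz_kernel_2d_bound
    (κ₀ ζ L s : ℝ) (hκ : 0 < κ₀) (hζ : 0 < ζ) (hL : 0 < L) (hs : 0 < s)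
    (J : ℂ) (w : EuclideanSpace ℂ (Fin 2))
    (hw1 : ζ * s ^ 2 ≤ (cdot w).re) (hw2 : ‖w‖ ≤ L * s) :
    (0 < ((κ₀ : ℂ) * csqrt (cdot w)).re ∧
      κ₀ * Real.sqrt ζ * s ≤ ((κ₀ : ℂ) * csqrt (cdot w)).re) ∧
    ‖(Complex.I / 4) * (-2 * Complex.I / (Real.pi : ℂ)) *
        (∫ t in Set.Ioi (0 : ℝ),
          Complex.exp ((Complex.I - (t : ℂ)) * ((κ₀ : ℂ) * csqrt (cdot w))) /
            csqrt ((t : ℂ) ^ 2 - 2 * Complex.I * t)) * J‖ ≤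
      (‖J‖ / 4) * Real.sqrt (2 / (Real.pi * κ₀ * Real.sqrt ζ)) * Real.exp (κ₀ * L * s) *
        s ^ (-(1 / 2 : ℝ)) := by
  have hπ := Real.pi_pos
  set u : ℂ := cdot w with hu_def
  have hure0 : 0 < u.re := lt_of_lt_of_le (by positivity) hw1
  have hu0 : u ≠ 0 := by intro h; rw [h] at hure0; simp at hure0
  set z : ℂ := (κ₀ : ℂ) * csqrt u with hz_def
  -- real part of csqrt u
  have hvre_eq : (csqrt u).re = Real.sqrt ((‖u‖ + u.re) / 2) := by
    rw [csqrt, one_div]; exact Complex.cpow_inv_two_re u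
  have hvre0 : 0 ≤ (csqrt u).re := hvre_eq ▸ Real.sqrt_nonneg _
  have hvre_ge : Real.sqrt u.re ≤ (csqrt u).re := by
    rw [hvre_eq]
    apply Real.sqrt_le_sqrt
    linarith [Complex.re_le_norm u]
  have hsζ : Real.sqrt ζ * s ≤ Real.sqrt u.re := by
    have h1 : Real.sqrt (ζ * s ^ 2) ≤ Real.sqrt u.re := Real.sqrt_le_sqrt hw1
    rwa [Real.sqrt_mul hζ.le, Real.sqrt_sq hs.le] at h1
  have hzre : z.re = κ₀ * (csqrt u).re := Complex.re_ofReal_mul κ₀ _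
  set b := κ₀ * Real.sqrt ζ * s with hb_def
  have hb0 : 0 < b := by positivity
  have hba : b ≤ z.re := by
    rw [hzre, hb_def, mul_assoc]
    exact mul_le_mul_of_nonneg_left (hsζ.trans hvre_ge) hκ.le
  set a := z.re with ha_def
  have ha0 : 0 < a := lt_of_lt_of_le hb0 hba
  refine ⟨⟨ha0, hba⟩, ?_⟩
  -- bound on |z|
  have habsv : ‖csqrt u‖ = Real.sqrt (‖u‖) := by
    rw [csqrt, Complex.norm_cpow_of_ne_zero hu0]; simp [Real.sqrt_eq_rpow]
  have hsum : ‖u‖ ≤ ‖w‖ ^ 2 := by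
    have h1 : ‖u‖ ≤ ∑ i, ‖w i * w i‖ := by
      rw [hu_def, cdot]; exact norm_sum_le _ _
    have h2 : ∑ i, ‖w i * w i‖ = ∑ i, ‖w i‖ ^ 2 := by
      simp [map_mul, sq]
    have h3 : ‖w‖ ^ 2 = ∑ i, ‖w i‖ ^ 2 := by
      rw [EuclideanSpace.norm_eq, Real.sq_sqrt (Finset.sum_nonneg fun i _ => sq_nonneg _)]
    rw [h3]; rw [h2] at h1; exact h1
  have habsv_le : ‖csqrt u‖ ≤ L * s := by
    rw [habsv]
    calc Real.sqrt (‖u‖) ≤ Real.sqrt (‖w‖ ^ 2) := Real.sqrt_le_sqrt hsum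
      _ = ‖w‖ := Real.sqrt_sq (norm_nonneg w)
      _ ≤ L * s := hw2
  set K := κ₀ * L * s with hK_def
  have him_le : |z.im| ≤ K := by
    calc |z.im| ≤ ‖z‖ := Complex.abs_im_le_norm _
      _ = |κ₀| * ‖csqrt u‖ := by rw [hz_def, norm_mul, Complex.norm_real, Real.norm_eq_abs]
      _ = κ₀ * ‖csqrt u‖ := by rw [abs_of_pos hκ]
      _ ≤ κ₀ * (L * s) := mul_le_mul_of_nonneg_left habsv_le hκ.le
      _ = K := by ring
  -- pointwise bound on the integrand
  have hbound : ∀ t ∈ Set.Ioi (0:ℝ),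
      ‖Complex.exp ((Complex.I - (t:ℂ)) * z) / csqrt ((t:ℂ) ^ 2 - 2 * Complex.I * t)‖
        ≤ Real.exp K / Real.sqrt 2 * (t ^ (-(1/2):ℝ) * Real.exp (-(a*t))) := by
    intro t ht
    have ht0 : (0:ℝ) < t := ht
    set q : ℂ := (t:ℂ) ^ 2 - 2 * Complex.I * t with hq_def
    have hqim : q.im = -(2*t) := by simp [hq_def, Complex.mul_im, pow_two]
    have hq0 : q ≠ 0 := by
      intro h; rw [h] at hqim; simp at hqim; linarith
    have habsq : 2 * t ≤ ‖q‖ := by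
      have h := Complex.abs_im_le_norm q
      rw [hqim, abs_neg, abs_of_pos (by positivity)] at h
      exact h
    have hcq : ‖csqrt q‖ = Real.sqrt (‖q‖) := by
      rw [csqrt, Complex.norm_cpow_of_ne_zero hq0]
      simp [Real.sqrt_eq_rpow]
    have hre : ((Complex.I - (t:ℂ)) * z).re = -t * a - z.im := by
      rw [Complex.mul_re]; simp [ha_def]
    have hre_le : ((Complex.I - (t:ℂ)) * z).re ≤ K - a * t := by
      rw [hre]
      have := neg_abs_le z.im
      have := him_le
      have h1 : -z.im ≤ |z.im| := by
        rcases abs_le.mp (le_refl |z.im|) with _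
        linarith [neg_abs_le z.im]
      linarith
    have hnorm : ‖Complex.exp ((Complex.I - (t:ℂ)) * z) / csqrt q‖
        = Real.exp (((Complex.I - (t:ℂ)) * z).re) / Real.sqrt (‖q‖) := by
      rw [norm_div, hcq, Complex.norm_exp]
    rw [hnorm]
    have hrhs : Real.exp K / Real.sqrt 2 * (t ^ (-(1/2):ℝ) * Real.exp (-(a*t)))
        = Real.exp (K - a * t) / (Real.sqrt 2 * Real.sqrt t) := by
      rw [Real.exp_sub, Real.exp_neg, Real.rpow_neg ht0.le, ← Real.sqrt_eq_rpow]
      ring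
    rw [hrhs]
    apply div_le_div₀ (Real.exp_pos _).le (Real.exp_le_exp.mpr hre_le)
      (by positivity)
    calc Real.sqrt 2 * Real.sqrt t = Real.sqrt (2 * t) := (Real.sqrt_mul (by norm_num) t).symm
      _ ≤ Real.sqrt (‖q‖) := Real.sqrt_le_sqrt habsq
  -- integral bound
  have hg_int : IntegrableOn
      (fun t => Real.exp K / Real.sqrt 2 * (t ^ (-(1/2):ℝ) * Real.exp (-(a*t))))
      (Set.Ioi (0:ℝ)) := (helm_aux_integrable a ha0).const_mul _
  have hInt : ‖∫ t in Set.Ioi (0:ℝ),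
      Complex.exp ((Complex.I - (t:ℂ)) * z) / csqrt ((t:ℂ) ^ 2 - 2 * Complex.I * t)‖
      ≤ Real.exp K / Real.sqrt 2 * ((1/a) ^ ((1/2):ℝ) * Real.sqrt Real.pi) := by
    have h := norm_integral_le_of_norm_le hg_int
      ((ae_restrict_iff' measurableSet_Ioi).mpr (Filter.Eventually.of_forall hbound))
    rwa [integral_const_mul, helm_aux_integral a ha0] at h
  -- prefactor
  have hpre : (Complex.I / 4) * (-2 * Complex.I / (Real.pi : ℂ))
      = ((1/(2*Real.pi) : ℝ) : ℂ) := by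
    rw [show (Complex.I/4) * (-2*Complex.I/(Real.pi:ℂ))
        = (-(Complex.I*Complex.I)) * (1/(2*(Real.pi:ℂ))) by ring, Complex.I_mul_I]
    push_cast; ring
  rw [hpre, norm_mul, norm_mul, Complex.norm_real, Real.norm_eq_abs,
    abs_of_pos (by positivity : (0:ℝ) < 1/(2*Real.pi))]
  -- final scalar computation
  have hrw1 : (1/a) ^ ((1/2):ℝ) = (Real.sqrt a)⁻¹ := by
    rw [← Real.sqrt_eq_rpow, one_div, Real.sqrt_inv]
  have hrw2 : s ^ (-(1/2:ℝ)) = (Real.sqrt s)⁻¹ := by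
    rw [Real.rpow_neg hs.le, ← Real.sqrt_eq_rpow]
  have hζs : 0 < Real.sqrt ζ := Real.sqrt_pos.mpr hζ
  have heq : Real.sqrt Real.pi / (2*Real.pi*Real.sqrt 2*Real.sqrt b)
      = Real.sqrt (2/(Real.pi*κ₀*Real.sqrt ζ)) / (4*Real.sqrt s) := by
    have h1 : (0:ℝ) ≤ Real.sqrt Real.pi / (2*Real.pi*Real.sqrt 2*Real.sqrt b) := by positivity
    have h2 : (0:ℝ) ≤ Real.sqrt (2/(Real.pi*κ₀*Real.sqrt ζ)) / (4*Real.sqrt s) := by positivity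
    rw [← Real.sqrt_sq h1, ← Real.sqrt_sq h2]
    congr 1
    rw [div_pow, div_pow, mul_pow, mul_pow, mul_pow, mul_pow,
      Real.sq_sqrt hπ.le, Real.sq_sqrt (by norm_num : (0:ℝ) ≤ 2),
      Real.sq_sqrt hb0.le, Real.sq_sqrt hs.le,
      Real.sq_sqrt (by positivity : (0:ℝ) ≤ 2/(Real.pi*κ₀*Real.sqrt ζ)), hb_def]
    field_simp
    ring
  have hsab : Real.sqrt b ≤ Real.sqrt a := Real.sqrt_le_sqrt hba
  have hsb0 : 0 < Real.sqrt b := Real.sqrt_pos.mpr hb0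
  have hfinal : 1/(2*Real.pi) * (Real.exp K / Real.sqrt 2 * ((1/a) ^ ((1/2):ℝ) * Real.sqrt Real.pi))
      ≤ 1/4 * Real.sqrt (2/(Real.pi*κ₀*Real.sqrt ζ)) * Real.exp K * s ^ (-(1/2:ℝ)) := by
    rw [hrw1, hrw2]
    have hmono : Real.sqrt Real.pi / (2*Real.pi*Real.sqrt 2*Real.sqrt a)
        ≤ Real.sqrt Real.pi / (2*Real.pi*Real.sqrt 2*Real.sqrt b) := by
      apply div_le_div_of_nonneg_left (Real.sqrt_nonneg _) (by positivity)
      have h2 : (0:ℝ) < 2*Real.pi*Real.sqrt 2 := by positivity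
      exact mul_le_mul_of_nonneg_left hsab h2.le
    calc 1/(2*Real.pi) * (Real.exp K / Real.sqrt 2 * ((Real.sqrt a)⁻¹ * Real.sqrt Real.pi))
        = Real.exp K * (Real.sqrt Real.pi / (2*Real.pi*Real.sqrt 2*Real.sqrt a)) := by
          field_simp
      _ ≤ Real.exp K * (Real.sqrt Real.pi / (2*Real.pi*Real.sqrt 2*Real.sqrt b)) :=
          mul_le_mul_of_nonneg_left hmono (Real.exp_pos _).le
      _ = Real.exp K * (Real.sqrt (2/(Real.pi*κ₀*Real.sqrt ζ)) / (4*Real.sqrt s)) := by rw [heq]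
      _ = 1/4 * Real.sqrt (2/(Real.pi*κ₀*Real.sqrt ζ)) * Real.exp K * (Real.sqrt s)⁻¹ := by ring
  calc 1/(2*Real.pi) * ‖∫ t in Set.Ioi (0:ℝ),
        Complex.exp ((Complex.I - (t:ℂ)) * z) / csqrt ((t:ℂ) ^ 2 - 2 * Complex.I * t)‖ * ‖J‖
      ≤ 1/(2*Real.pi) * (Real.exp K / Real.sqrt 2 * ((1/a) ^ ((1/2):ℝ) * Real.sqrt Real.pi)) * ‖J‖ := by
        apply mul_le_mul_of_nonneg_right _ (norm_nonneg J)
        exact mul_le_mul_of_nonneg_left hInt (by positivity)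
    _ ≤ 1/4 * Real.sqrt (2/(Real.pi*κ₀*Real.sqrt ζ)) * Real.exp K * s ^ (-(1/2:ℝ)) * ‖J‖ :=
        mul_le_mul_of_nonneg_right hfinal (norm_nonneg J)
    _ = ‖J‖/4 * Real.sqrt (2/(Real.pi*κ₀*Real.sqrt ζ)) * Real.exp K * s ^ (-(1/2:ℝ)) := by ring
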